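/- Let α > 1, let C ≥ 1, and let B, A_1, …, A_C be n×n real symmetric positive semidefinite matrices with nonnegative entries whose diagonal entries all equal 1/n (so each has trace 1). Then the matrix-based multivariate mutual information is bounded above by the entropy of the input and by the joint entropy of the feature maps: I_α(B; {A_1, …, A_C}) ≤ S_α(B) and I_α(B; {A_1, …, A_C}) ≤ S_α((A_1∘⋯∘A_C)/tr(A_1∘⋯∘A_C)). In particular, the maximum amount of information about the input X that the feature maps of a layer can capture is the entropy of the input. -/

import Mathlib

open Matrix

/-- Matrix-based Rényi α-entropy: `(1/(1-α)) · log₂ (∑ λᵢ(A)^α)` for a Hermitian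
(real symmetric) matrix `A`, and `0` otherwise. -/
noncomputable def Salpha {n : ℕ} (α : ℝ) (A : Matrix (Fin n) (Fin n) ℝ) : ℝ :=
  if h : A.IsHermitian then (1 / (1 - α)) * Real.logb 2 (∑ i, (h.eigenvalues i) ^ α) else 0

/-- Entrywise (Hadamard) product of a finite family of matrices. -/
noncomputable def hadamardProd {n C : ℕ} (A : Fin C → Matrix (Fin n) (Fin n) ℝ) :
    Matrix (Fin n) (Fin n) ℝ :=
  fun i j => ∏ k, A k i j

/-- Hadamard product normalized by its trace. -/
noncomputable def normHadamardProd {n C : ℕ} (A : Fin C → Matrix (Fin n) (Fin n) ℝ) :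
    Matrix (Fin n) (Fin n) ℝ :=
  (Matrix.trace (hadamardProd A))⁻¹ • hadamardProd A

section Helpers
variable {n : ℕ}

private lemma herm_entry {A : Matrix (Fin n) (Fin n) ℝ} (hA : A.IsHermitian) (a b : Fin n) :
    A b a = A a b := by
  have := congrFun (congrFun hA.symm a) b
  simpa [Matrix.conjTranspose_apply] using this.symm

private lemma spec_entry {A : Matrix (Fin n) (Fin n) ℝ} (hA : A.IsHermitian) (a b : Fin n) :
    A a b = ∑ j, hA.eigenvalues j *
      ((hA.eigenvectorUnitary : Matrix (Fin n) (Fin n) ℝ) a j *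
       (hA.eigenvectorUnitary : Matrix (Fin n) (Fin n) ℝ) b j) := by
  conv_lhs => rw [hA.spectral_theorem]
  simp [Matrix.mul_apply, Matrix.diagonal_apply, Finset.sum_ite_eq, star_apply,
    mul_comm, mul_assoc, mul_left_comm]

private lemma col_orth {A : Matrix (Fin n) (Fin n) ℝ} (hA : A.IsHermitian) (a b : Fin n) :
    ∑ j, (hA.eigenvectorUnitary : Matrix (Fin n) (Fin n) ℝ) a j *
       (hA.eigenvectorUnitary : Matrix (Fin n) (Fin n) ℝ) b j = if a = b then 1 else 0 := by
  have h := Matrix.mem_unitaryGroup_iff.mp hA.eigenvectorUnitary.2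
  have := congrFun (congrFun h a) b
  simpa [Matrix.mul_apply, Matrix.one_apply, star_apply] using this

private lemma row_orth {A : Matrix (Fin n) (Fin n) ℝ} (hA : A.IsHermitian) (a b : Fin n) :
    ∑ j, (hA.eigenvectorUnitary : Matrix (Fin n) (Fin n) ℝ) j a *
       (hA.eigenvectorUnitary : Matrix (Fin n) (Fin n) ℝ) j b = if a = b then 1 else 0 := by
  have h := Matrix.mem_unitaryGroup_iff'.mp hA.eigenvectorUnitary.2
  have := congrFun (congrFun h a) b
  simpa [Matrix.mul_apply, Matrix.one_apply, star_apply] using this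

private lemma eig_quadform {A : Matrix (Fin n) (Fin n) ℝ} (hA : A.IsHermitian) (i : Fin n) :
    hA.eigenvalues i = ∑ a, ∑ b, (hA.eigenvectorUnitary : Matrix (Fin n) (Fin n) ℝ) a i
      * A a b * (hA.eigenvectorUnitary : Matrix (Fin n) (Fin n) ℝ) b i := by
  have h := hA.conjStarAlgAut_star_eigenvectorUnitary
  have := congrFun (congrFun h i) i
  simp [Matrix.mul_apply, Matrix.diagonal_apply, star_apply, Finset.sum_mul] at this
  rw [← this, Finset.sum_comm]
  refine Finset.sum_congr rfl fun a _ => Finset.sum_congr rfl fun b _ => ?_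
  simp [Matrix.IsHermitian.eigenvectorUnitary_apply]

private lemma sum_eig {A : Matrix (Fin n) (Fin n) ℝ} (hA : A.IsHermitian) :
    ∑ i, hA.eigenvalues i = A.trace := by
  nth_rewrite 2 [hA.spectral_theorem]
  rw [Unitary.conjStarAlgAut_apply]
  rw [Matrix.trace_mul_cycle]
  rw [show (star (hA.eigenvectorUnitary : Matrix (Fin n) (Fin n) ℝ)) *
      (hA.eigenvectorUnitary : Matrix (Fin n) (Fin n) ℝ) = 1 from
    Matrix.mem_unitaryGroup_iff'.mp hA.eigenvectorUnitary.2, one_mul]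
  simp [Matrix.trace, Matrix.diag, Matrix.diagonal_apply]

private lemma psd_quad {Q : Matrix (Fin n) (Fin n) ℝ} (hQ : Q.PosSemidef) (v : Fin n → ℝ) :
    0 ≤ ∑ a, ∑ b, v a * Q a b * v b := by
  have h := hQ.dotProduct_mulVec_nonneg v
  simp only [dotProduct, Matrix.mulVec, Pi.star_apply, star_trivial,
    dotProduct, Finset.mul_sum] at h
  calc (0:ℝ) ≤ ∑ a, ∑ b, v a * (Q a b * v b) := h
    _ = _ := by exact Finset.sum_congr rfl fun a _ => Finset.sum_congr rfl fun b _ => by ring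

private lemma hadamard_psd {P Q : Matrix (Fin n) (Fin n) ℝ} (hP : P.PosSemidef)
    (hQ : Q.PosSemidef) :
    Matrix.PosSemidef (fun a b => P a b * Q a b : Matrix (Fin n) (Fin n) ℝ) := by
  refine Matrix.posSemidef_iff_dotProduct_mulVec.mpr ?_
  constructor
  · ext a b
    show star (P b a * Q b a) = P a b * Q a b
    rw [star_trivial]
    rw [herm_entry hP.1, herm_entry hQ.1]
  · intro x
    set V : Matrix (Fin n) (Fin n) ℝ := (hQ.1.eigenvectorUnitary : Matrix (Fin n) (Fin n) ℝ) with hV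
    have key : star x ⬝ᵥ (fun a b => P a b * Q a b : Matrix (Fin n) (Fin n) ℝ) *ᵥ x
        = ∑ k, ∑ a, ∑ b, hQ.1.eigenvalues k * ((x a * V a k) * P a b * (x b * V b k)) := by
      simp only [dotProduct, Matrix.mulVec, Pi.star_apply, star_trivial,
        dotProduct, Finset.mul_sum]
      calc ∑ a, ∑ b, x a * (P a b * Q a b * x b)
          = ∑ a, ∑ b, ∑ k, hQ.1.eigenvalues k * ((x a * V a k) * P a b * (x b * V b k)) := by
            refine Finset.sum_congr rfl fun a _ => Finset.sum_congr rfl fun b _ => ?_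
            rw [spec_entry hQ.1 a b]
            simp only [Finset.mul_sum, Finset.sum_mul]
            exact Finset.sum_congr rfl fun k _ => by ring
        _ = ∑ a, ∑ k, ∑ b, hQ.1.eigenvalues k * ((x a * V a k) * P a b * (x b * V b k)) :=
            Finset.sum_congr rfl fun a _ => Finset.sum_comm
        _ = _ := Finset.sum_comm
    rw [key]
    refine Finset.sum_nonneg fun k _ => ?_
    have e : ∑ a, ∑ b, hQ.1.eigenvalues k * ((x a * V a k) * P a b * (x b * V b k))
        = hQ.1.eigenvalues k * ∑ a, ∑ b, (x a * V a k) * P a b * (x b * V b k) := by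
      simp [Finset.mul_sum]
    rw [e]
    exact mul_nonneg (hQ.eigenvalues_nonneg k) (psd_quad hP _)



private lemma psd_of_quad {n : ℕ} {M : Matrix (Fin n) (Fin n) ℝ} (h1 : ∀ a b, M b a = M a b)
    (h2 : ∀ x : Fin n → ℝ, 0 ≤ ∑ a, ∑ b, x a * M a b * x b) : M.PosSemidef := by
  rw [Matrix.posSemidef_iff_dotProduct_mulVec]
  constructor
  · ext a b
    simp only [Matrix.conjTranspose_apply, star_trivial]
    exact h1 a b
  · intro x
    calc (0:ℝ) ≤ ∑ a, ∑ b, x a * M a b * x b := h2 x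
      _ = star x ⬝ᵥ M *ᵥ x := by
        simp only [dotProduct, Matrix.mulVec, Pi.star_apply, star_trivial,
          Finset.mul_sum]
        exact Finset.sum_congr rfl fun a _ => Finset.sum_congr rfl fun b _ => by ring

private lemma psd_smul {n : ℕ} {M : Matrix (Fin n) (Fin n) ℝ} {c : ℝ} (hc : 0 ≤ c)
    (hM : M.PosSemidef) : (c • M).PosSemidef := by
  refine psd_of_quad (fun a b => ?_) fun x => ?_
  · simp only [Matrix.smul_apply, smul_eq_mul]
    rw [herm_entry hM.1]
  · have h := psd_quad hM x
    calc (0:ℝ) ≤ c * ∑ a, ∑ b, x a * M a b * x b := mul_nonneg hc h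
      _ = ∑ a, ∑ b, x a * (c • M) a b * x b := by
          simp only [Finset.mul_sum, Matrix.smul_apply, smul_eq_mul]
          exact Finset.sum_congr rfl fun a _ => Finset.sum_congr rfl fun b _ => by ring

private lemma prod_psd {n C : ℕ} (A : Fin C → Matrix (Fin n) (Fin n) ℝ)
    (h : ∀ k, (A k).PosSemidef) (s : Finset (Fin C)) :
    Matrix.PosSemidef (fun a b => ∏ k ∈ s, A k a b : Matrix (Fin n) (Fin n) ℝ) := by
  classical
  induction s using Finset.induction_on with
  | empty =>
    refine psd_of_quad (fun a b => by simp) fun x => ?_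
    have e : ∑ a, ∑ b, x a * (∏ k ∈ (∅ : Finset (Fin C)), A k a b) * x b
        = (∑ a, x a) * (∑ b, x b) := by
      rw [Finset.sum_mul]
      refine Finset.sum_congr rfl fun a _ => ?_
      rw [Finset.mul_sum]
      exact Finset.sum_congr rfl fun b _ => by simp
    rw [e]
    exact mul_self_nonneg _
  | @insert k s hk ih =>
    have e : (fun a b => ∏ j ∈ insert k s, A j a b : Matrix (Fin n) (Fin n) ℝ)
        = fun a b => A k a b * ∏ j ∈ s, A j a b := by
      funext a b; exact Finset.prod_insert hk
    rw [e]
    exact hadamard_psd (h k) ih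

private lemma powsum_le {n : ℕ} {α : ℝ} (hα : 1 < α) {P Q M : Matrix (Fin n) (Fin n) ℝ}
    (hP : P.PosSemidef) (hQ : Q.PosSemidef)
    (hQdiag : ∀ i, Q i i = 1 / (n : ℝ))
    (hMeq : M = fun a b => (n : ℝ) * (P a b * Q a b))
    (hM : M.IsHermitian) :
    ∑ i, (hM.eigenvalues i) ^ α ≤ ∑ j, (hP.1.eigenvalues j) ^ α := by
  set U : Matrix (Fin n) (Fin n) ℝ := (hM.eigenvectorUnitary : Matrix (Fin n) (Fin n) ℝ) with hU
  set V : Matrix (Fin n) (Fin n) ℝ := (hP.1.eigenvectorUnitary : Matrix (Fin n) (Fin n) ℝ) with hV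
  set μ : Fin n → ℝ := hP.1.eigenvalues with hμ
  set ν : Fin n → ℝ := hM.eigenvalues with hν
  set S : Fin n → Fin n → ℝ :=
    fun i j => (n:ℝ) * ∑ a, ∑ b, (U a i * V a j) * Q a b * (U b i * V b j) with hS
  have hS0 : ∀ i j, 0 ≤ S i j := fun i j =>
    mul_nonneg (Nat.cast_nonneg n) (psd_quad hQ (fun a => U a i * V a j))
  -- ν i = ∑ j, S i j * μ j
  have hνS : ∀ i, ν i = ∑ j, S i j * μ j := by
    intro i
    calc ν i = ∑ a, ∑ b, U a i * M a b * U b i := eig_quadform hM i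
      _ = ∑ a, ∑ b, ∑ j, ((n:ℝ) * ((U a i * V a j) * Q a b * (U b i * V b j))) * μ j := by
          refine Finset.sum_congr rfl fun a _ => Finset.sum_congr rfl fun b _ => ?_
          rw [hMeq]
          show U a i * ((n:ℝ) * (P a b * Q a b)) * U b i = _
          rw [spec_entry hP.1 a b]
          simp only [Finset.mul_sum, Finset.sum_mul]
          exact Finset.sum_congr rfl fun j _ => by ring
      _ = ∑ a, ∑ j, ∑ b, ((n:ℝ) * ((U a i * V a j) * Q a b * (U b i * V b j))) * μ j :=
          Finset.sum_congr rfl fun a _ => Finset.sum_comm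
      _ = ∑ j, ∑ a, ∑ b, ((n:ℝ) * ((U a i * V a j) * Q a b * (U b i * V b j))) * μ j :=
          Finset.sum_comm
      _ = ∑ j, S i j * μ j := by
          refine Finset.sum_congr rfl fun j _ => ?_
          show _ = ((n:ℝ) * ∑ a, ∑ b, (U a i * V a j) * Q a b * (U b i * V b j)) * μ j
          simp only [Finset.mul_sum, Finset.sum_mul]
  -- row sums are 1
  have hrow : ∀ i, ∑ j, S i j = 1 := by
    intro i
    have hn : (n:ℝ) ≠ 0 := Nat.cast_ne_zero.mpr i.pos.ne'
    calc ∑ j, S i j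
        = ∑ j, ∑ a, ∑ b, (n:ℝ) * ((U a i * V a j) * Q a b * (U b i * V b j)) := by
          refine Finset.sum_congr rfl fun j _ => ?_
          show (n:ℝ) * ∑ a, ∑ b, (U a i * V a j) * Q a b * (U b i * V b j) = _
          simp only [Finset.mul_sum]
      _ = ∑ a, ∑ j, ∑ b, (n:ℝ) * ((U a i * V a j) * Q a b * (U b i * V b j)) :=
          Finset.sum_comm
      _ = ∑ a, ∑ b, ∑ j, (n:ℝ) * ((U a i * V a j) * Q a b * (U b i * V b j)) :=
          Finset.sum_congr rfl fun a _ => Finset.sum_comm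
      _ = ∑ a, ∑ b, ((n:ℝ) * (U a i * U b i * Q a b)) * (∑ j, V a j * V b j) := by
          refine Finset.sum_congr rfl fun a _ => Finset.sum_congr rfl fun b _ => ?_
          rw [Finset.mul_sum]
          exact Finset.sum_congr rfl fun j _ => by ring
      _ = ∑ a, (n:ℝ) * (U a i * U a i * Q a a) := by
          refine Finset.sum_congr rfl fun a _ => ?_
          simp only [hV, col_orth hP.1, mul_ite, mul_one, mul_zero]
          simp [Finset.sum_ite_eq]
      _ = ∑ a, U a i * U a i := by
          refine Finset.sum_congr rfl fun a _ => ?_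
          rw [hQdiag a]
          field_simp
      _ = 1 := by simpa [hU] using row_orth hM i i
  -- column sums are 1
  have hcol : ∀ j, ∑ i, S i j = 1 := by
    intro j
    have hn : (n:ℝ) ≠ 0 := Nat.cast_ne_zero.mpr j.pos.ne'
    calc ∑ i, S i j
        = ∑ i, ∑ a, ∑ b, (n:ℝ) * ((U a i * V a j) * Q a b * (U b i * V b j)) := by
          refine Finset.sum_congr rfl fun i _ => ?_
          show (n:ℝ) * ∑ a, ∑ b, (U a i * V a j) * Q a b * (U b i * V b j) = _
          simp only [Finset.mul_sum]
      _ = ∑ a, ∑ i, ∑ b, (n:ℝ) * ((U a i * V a j) * Q a b * (U b i * V b j)) :=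
          Finset.sum_comm
      _ = ∑ a, ∑ b, ∑ i, (n:ℝ) * ((U a i * V a j) * Q a b * (U b i * V b j)) :=
          Finset.sum_congr rfl fun a _ => Finset.sum_comm
      _ = ∑ a, ∑ b, ((n:ℝ) * (V a j * V b j * Q a b)) * (∑ i, U a i * U b i) := by
          refine Finset.sum_congr rfl fun a _ => Finset.sum_congr rfl fun b _ => ?_
          rw [Finset.mul_sum]
          exact Finset.sum_congr rfl fun i _ => by ring
      _ = ∑ a, (n:ℝ) * (V a j * V a j * Q a a) := by
          refine Finset.sum_congr rfl fun a _ => ?_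
          simp only [hU, col_orth hM, mul_ite, mul_one, mul_zero]
          simp [Finset.sum_ite_eq]
      _ = ∑ a, V a j * V a j := by
          refine Finset.sum_congr rfl fun a _ => ?_
          rw [hQdiag a]
          field_simp
      _ = 1 := by simpa [hV] using row_orth hP.1 j j
  -- Jensen
  have hμ0 : ∀ j, 0 ≤ μ j := fun j => hP.eigenvalues_nonneg j
  have jensen : ∀ i, ν i ^ α ≤ ∑ j, S i j * μ j ^ α := by
    intro i
    have h := (convexOn_rpow hα.le).map_sum_le (t := Finset.univ) (w := S i) (p := μ)
      (fun j _ => hS0 i j) (hrow i) (fun j _ => hμ0 j)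
    simpa [smul_eq_mul, ← hνS i] using h
  calc ∑ i, ν i ^ α ≤ ∑ i, ∑ j, S i j * μ j ^ α := Finset.sum_le_sum fun i _ => jensen i
    _ = ∑ j, (∑ i, S i j) * μ j ^ α := by
        rw [Finset.sum_comm]
        exact Finset.sum_congr rfl fun j _ => (Finset.sum_mul _ _ _).symm
    _ = ∑ j, μ j ^ α := by simp [hcol]

private lemma Salpha_mono {n : ℕ} {α : ℝ} (hα : 1 < α) (hn : 0 < n)
    {P Q M : Matrix (Fin n) (Fin n) ℝ}
    (hP : P.PosSemidef) (hQ : Q.PosSemidef)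
    (hPtr : P.trace = 1) (hQdiag : ∀ i, Q i i = 1 / (n : ℝ))
    (hMeq : M = fun a b => (n : ℝ) * (P a b * Q a b)) :
    Salpha α P ≤ Salpha α M := by
  have hnne : (n:ℝ) ≠ 0 := (Nat.cast_pos.mpr hn).ne'
  have hMpsd : M.PosSemidef := by
    rw [hMeq]
    refine psd_of_quad (fun a b => ?_) fun x => ?_
    · show (n:ℝ) * (P b a * Q b a) = (n:ℝ) * (P a b * Q a b)
      rw [herm_entry hP.1, herm_entry hQ.1]
    · have h2 := psd_quad (hadamard_psd hP hQ) x
      calc (0:ℝ) ≤ (n:ℝ) * ∑ a, ∑ b, x a * (P a b * Q a b) * x b :=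
            mul_nonneg (Nat.cast_nonneg n) h2
        _ = _ := by
            simp only [Finset.mul_sum]
            exact Finset.sum_congr rfl fun a _ => Finset.sum_congr rfl fun b _ => by ring
  have hMherm := hMpsd.1
  have hμtr : ∑ j, hP.1.eigenvalues j = 1 := (sum_eig hP.1).trans hPtr
  have hMtr : M.trace = 1 := by
    rw [hMeq]
    show ∑ a, (n:ℝ) * (P a a * Q a a) = 1
    calc ∑ a, (n:ℝ) * (P a a * Q a a) = ∑ a, P a a := by
          refine Finset.sum_congr rfl fun a _ => ?_
          rw [hQdiag a]; field_simp
      _ = 1 := hPtr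
  have hνtr : ∑ i, hMherm.eigenvalues i = 1 := (sum_eig hMherm).trans hMtr
  have hpow := powsum_le hα hP hQ hQdiag hMeq hMherm
  have hposμ : 0 < ∑ j, hP.1.eigenvalues j ^ α := by
    obtain ⟨j, hj⟩ : ∃ j, 0 < hP.1.eigenvalues j := by
      by_contra h
      push_neg at h
      have : ∑ j, hP.1.eigenvalues j ≤ 0 := Finset.sum_nonpos fun j _ => h j
      linarith
    exact lt_of_lt_of_le (Real.rpow_pos_of_pos hj α)
      (Finset.single_le_sum
        (fun j _ => Real.rpow_nonneg (hP.eigenvalues_nonneg j) α) (Finset.mem_univ j))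
  have hposν : 0 < ∑ i, hMherm.eigenvalues i ^ α := by
    obtain ⟨i, hi⟩ : ∃ i, 0 < hMherm.eigenvalues i := by
      by_contra h
      push_neg at h
      have : ∑ i, hMherm.eigenvalues i ≤ 0 := Finset.sum_nonpos fun i _ => h i
      linarith
    exact lt_of_lt_of_le (Real.rpow_pos_of_pos hi α)
      (Finset.single_le_sum
        (fun i _ => Real.rpow_nonneg (hMpsd.eigenvalues_nonneg i) α) (Finset.mem_univ i))
  unfold Salpha
  rw [dif_pos hP.1, dif_pos hMherm]
  have hc : (1:ℝ) / (1 - α) ≤ 0 :=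
    div_nonpos_of_nonneg_of_nonpos (by norm_num) (by linarith)
  have hlog : Real.logb 2 (∑ i, hMherm.eigenvalues i ^ α)
      ≤ Real.logb 2 (∑ j, hP.1.eigenvalues j ^ α) :=
    Real.logb_le_logb_of_le (by norm_num) hposν hpow
  exact mul_le_mul_of_nonpos_left hlog hc

/-- the matrix-based multivariate mutual information is bounded above
by the entropy of the input and by the joint entropy of the feature maps. -/
theorem matrix_MMI_le_entropies {n C : ℕ} (hC : 1 ≤ C) (α : ℝ) (hα : 1 < α)
    (B : Matrix (Fin n) (Fin n) ℝ) (A : Fin C → Matrix (Fin n) (Fin n) ℝ)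
    (hBpsd : B.PosSemidef) (hBnonneg : ∀ i j, 0 ≤ B i j)
    (hBdiag : ∀ i, B i i = 1 / (n : ℝ))
    (hpsd : ∀ k, (A k).PosSemidef) (hnonneg : ∀ k i j, 0 ≤ A k i j)
    (hdiag : ∀ k i, A k i i = 1 / (n : ℝ)) :
    Salpha α B + Salpha α (normHadamardProd A)
        - Salpha α (normHadamardProd (Fin.snoc A B)) ≤ Salpha α B ∧
    Salpha α B + Salpha α (normHadamardProd A)
        - Salpha α (normHadamardProd (Fin.snoc A B))
      ≤ Salpha α (normHadamardProd A) := by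
  rcases Nat.eq_zero_or_pos n with hn | hn
  · subst hn
    have hz : ∀ (X : Matrix (Fin 0) (Fin 0) ℝ), Salpha α X = 0 := by
      intro X
      have hX : X.IsHermitian := by ext a b; exact a.elim0
      unfold Salpha
      rw [dif_pos hX]
      simp
    rw [hz, hz, hz]
    norm_num
  · have hnne : (n:ℝ) ≠ 0 := (Nat.cast_pos.mpr hn).ne'
    have htne : ((1:ℝ)/n)^C ≠ 0 := pow_ne_zero _ (one_div_ne_zero hnne)
    -- facts about hadamardProd A
    have hHpsd : (hadamardProd A).PosSemidef := prod_psd A hpsd Finset.univ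
    have hHdiag : ∀ a, hadamardProd A a a = ((1:ℝ)/n)^C := by
      intro a
      show ∏ k, A k a a = _
      simp [hdiag]
    have htrH : (hadamardProd A).trace = n * ((1:ℝ)/n)^C := by
      show ∑ a, hadamardProd A a a = _
      simp only [hHdiag]
      simp [Finset.sum_const, Finset.card_univ, mul_comm]
    have htrHpos : 0 < (hadamardProd A).trace := by
      rw [htrH]
      positivity
    -- facts about NA := normHadamardProd A
    set NA := normHadamardProd A with hNA
    have hNApsd : NA.PosSemidef := psd_smul (inv_nonneg.mpr htrHpos.le) hHpsd
    have hNAdiag : ∀ a, NA a a = 1 / (n:ℝ) := by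
      intro a
      show ((hadamardProd A).trace)⁻¹ * hadamardProd A a a = _
      rw [htrH, hHdiag]
      field_simp
    have hNAtr : NA.trace = 1 := by
      show ∑ a, NA a a = 1
      simp only [hNAdiag]
      rw [Finset.sum_const, Finset.card_univ, Fintype.card_fin, nsmul_eq_mul]
      field_simp
    -- B trace
    have hBtr : B.trace = 1 := by
      show ∑ a, B a a = 1
      simp only [hBdiag]
      rw [Finset.sum_const, Finset.card_univ, Fintype.card_fin, nsmul_eq_mul]
      field_simp
    -- snoc product entries
    have hsnoc : ∀ a b, hadamardProd (Fin.snoc A B) a b = hadamardProd A a b * B a b := by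
      intro a b
      show ∏ k : Fin (C+1), (Fin.snoc A B : Fin (C+1) → Matrix (Fin n) (Fin n) ℝ) k a b = (∏ k, A k a b) * B a b
      rw [Fin.prod_univ_castSucc]
      simp [Fin.snoc_castSucc, Fin.snoc_last]
    have htrsnoc : (hadamardProd (Fin.snoc A B)).trace = n * (((1:ℝ)/n)^C * (1/n)) := by
      show ∑ a, hadamardProd (Fin.snoc A B) a a = _
      calc ∑ a, hadamardProd (Fin.snoc A B) a a = ∑ a : Fin n, ((1:ℝ)/n)^C * (1/n) := by
            refine Finset.sum_congr rfl fun a _ => ?_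
            rw [hsnoc, hHdiag, hBdiag]
        _ = _ := by
            rw [Finset.sum_const, Finset.card_univ, Fintype.card_fin, nsmul_eq_mul]
    have hM1 : normHadamardProd (Fin.snoc A B)
        = fun a b => (n:ℝ) * (B a b * NA a b) := by
      funext a b
      show ((hadamardProd (Fin.snoc A B)).trace)⁻¹ * hadamardProd (Fin.snoc A B) a b = _
      rw [htrsnoc, hsnoc]
      show _ = (n:ℝ) * (B a b * (((hadamardProd A).trace)⁻¹ * hadamardProd A a b))
      rw [htrH]
      field_simp
    have hM2 : normHadamardProd (Fin.snoc A B)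
        = fun a b => (n:ℝ) * (NA a b * B a b) := by
      rw [hM1]; funext a b; ring
    have ineq1 : Salpha α B ≤ Salpha α (normHadamardProd (Fin.snoc A B)) :=
      Salpha_mono hα hn hBpsd hNApsd hBtr hNAdiag hM1
    have ineq2 : Salpha α NA ≤ Salpha α (normHadamardProd (Fin.snoc A B)) :=
      Salpha_mono hα hn hNApsd hBpsd hNAtr hBdiag hM2
    constructor <;> linarith
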